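/- Let A = QΛQᵀ be symmetric with eigenvalues λ₁,…,λₙ, and let v be uniformly distributed on the unit sphere in ℝⁿ. Then E[(vᵀ f(A) v)²] = (2/(n(n+2)))·Σᵢ f(λᵢ)² + (1/(n(n+2)))·(Σᵢ f(λᵢ))². -/

import Mathlib

open MeasureTheory Matrix

section givens
variable {n : ℕ}

lemma transpose_stdBasisMatrix' (i j : Fin n) (a : ℝ) :
    (Matrix.single i j a)ᵀ = Matrix.single j i a := by
  ext k l
  simp [Matrix.single, Matrix.transpose_apply, and_comm]

/-- Givens rotation in the (i,j) plane. -/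
def givens (i j : Fin n) (c s : ℝ) : Matrix (Fin n) (Fin n) ℝ :=
  1 + (c - 1) • Matrix.single i i (1:ℝ) + (c - 1) • Matrix.single j j (1:ℝ)
    + s • Matrix.single i j (1:ℝ) + (-s) • Matrix.single j i (1:ℝ)

lemma givens_orthogonal {i j : Fin n} (hij : i ≠ j) {c s : ℝ} (h : c ^ 2 + s ^ 2 = 1) :
    (givens i j c s)ᵀ * givens i j c s = 1 := by
  simp only [givens, Matrix.transpose_add, Matrix.transpose_smul, Matrix.transpose_one,
    transpose_stdBasisMatrix']
  simp only [Matrix.add_mul, Matrix.mul_add, Matrix.smul_mul, Matrix.mul_smul,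
    Matrix.one_mul, Matrix.mul_one]
  simp only [Matrix.single_mul_single_same, Matrix.single_mul_single_of_ne _ _ _ _ hij,
    Matrix.single_mul_single_of_ne _ _ _ _ hij.symm, smul_zero, mul_one]
  match_scalars <;> first | ring1 | linear_combination -h | linear_combination h

lemma givens_mulVec_i {i j : Fin n} (hij : i ≠ j) (c s : ℝ) (x : Fin n → ℝ) :
    (givens i j c s).mulVec x i = c * x i + s * x j := by
  simp [givens, Matrix.add_mulVec, Matrix.smul_mulVec, Matrix.one_mulVec,
    Matrix.single_mulVec, Function.update_apply, hij, hij.symm, Matrix.neg_mulVec]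
  ring

lemma measurable_mulVec (R : Matrix (Fin n) (Fin n) ℝ) :
    Measurable (fun x : Fin n → ℝ => R.mulVec x) := by
  have : Continuous (fun x : Fin n → ℝ => R.mulVec x) := by
    have := R.mulVecLin.continuous_of_finiteDimensional
    exact this
  exact this.measurable

lemma transfer {Ω : Type*} [MeasurableSpace Ω] (μ : Measure Ω)
    (v : Ω → Fin n → ℝ) (hv : Measurable v)
    (hrot : ∀ R : Matrix (Fin n) (Fin n) ℝ, Rᵀ * R = 1 →
      Measure.map (fun ω => R.mulVec (v ω)) μ = Measure.map v μ)
    (R : Matrix (Fin n) (Fin n) ℝ) (hR : Rᵀ * R = 1)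
    (g : (Fin n → ℝ) → ℝ) (hg : Measurable g) :
    ∫ ω, g (R.mulVec (v ω)) ∂μ = ∫ ω, g (v ω) ∂μ := by
  have hRv : Measurable (fun ω => R.mulVec (v ω)) := (measurable_mulVec R).comp hv
  rw [← integral_map hRv.aemeasurable hg.aestronglyMeasurable, hrot R hR,
    integral_map hv.aemeasurable hg.aestronglyMeasurable]

end givens

lemma sphere_moment_core {Ω : Type*} [MeasurableSpace Ω] (μ : Measure Ω)
    [IsProbabilityMeasure μ] (n : ℕ) (hn : 0 < n)
    (v : Ω → Fin n → ℝ) (hv : Measurable v)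
    (hnorm : ∀ ω, ∑ i, (v ω i) ^ 2 = 1)
    (hrot : ∀ R : Matrix (Fin n) (Fin n) ℝ, Rᵀ * R = 1 →
      Measure.map (fun ω => R.mulVec (v ω)) μ = Measure.map v μ)
    (c : Fin n → ℝ) :
    ∫ ω, (∑ i, c i * (v ω i) ^ 2) ^ 2 ∂μ =
      (2 / (n * (n + 2))) * ∑ i, (c i) ^ 2 + (1 / (n * (n + 2))) * (∑ i, c i) ^ 2 := by
  have hvi : ∀ i : Fin n, Measurable fun ω => v ω i :=
    fun i => (measurable_pi_apply i).comp hv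
  have hb1 : ∀ ω i, (v ω i) ^ 2 ≤ 1 := by
    intro ω i
    calc (v ω i) ^ 2 ≤ ∑ j, (v ω j) ^ 2 :=
          Finset.single_le_sum (f := fun j => (v ω j) ^ 2) (fun j _ => sq_nonneg _)
            (Finset.mem_univ i)
      _ = 1 := hnorm ω
  have habs : ∀ ω i, |v ω i| ≤ 1 := by
    intro ω i
    nlinarith [hb1 ω i, abs_nonneg (v ω i), sq_abs (v ω i)]
  -- integrability of second-moment products
  have hintm : ∀ i j : Fin n, Integrable (fun ω => (v ω i) ^ 2 * (v ω j) ^ 2) μ := by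
    intro i j
    refine Integrable.mono' (integrable_const 1) (((hvi i).pow_const 2).mul
      ((hvi j).pow_const 2)).aestronglyMeasurable (ae_of_all _ fun ω => ?_)
    have h1 := hb1 ω i; have h2 := hb1 ω j
    have n1 : (0:ℝ) ≤ (v ω i) ^ 2 := sq_nonneg _
    have n2 : (0:ℝ) ≤ (v ω j) ^ 2 := sq_nonneg _
    rw [Real.norm_eq_abs, abs_of_nonneg (by positivity)]
    nlinarith
  set m : Fin n → Fin n → ℝ := fun i j => ∫ ω, (v ω i) ^ 2 * (v ω j) ^ 2 ∂μ with hm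
  set i0 : Fin n := ⟨0, hn⟩
  set b : ℝ := m i0 i0 with hbdef
  -- equal diagonal moments
  have h4eq : ∀ i j : Fin n, i ≠ j → m i i = m j j := by
    intro i j hij
    have hR := givens_orthogonal hij (c := 0) (s := 1) (by norm_num)
    have := transfer μ v hv hrot _ hR (fun x => (x i) ^ 2 * (x i) ^ 2)
      (((measurable_pi_apply i).pow_const 2).mul ((measurable_pi_apply i).pow_const 2))
    simp only [givens_mulVec_i hij, zero_mul, one_mul, zero_add] at this
    exact this.symm
  -- off-diagonal moments
  have hmb : ∀ i j : Fin n, i ≠ j → m i j = m i i / 3 := by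
    intro i j hij
    set r : ℝ := Real.sqrt (1/2) with hrdef
    have hr2 : r ^ 2 = 1/2 := Real.sq_sqrt (by norm_num)
    have hg1 : Measurable fun x : Fin n → ℝ => (x i) ^ 2 * (x i) ^ 2 :=
      ((measurable_pi_apply i).pow_const 2).mul ((measurable_pi_apply i).pow_const 2)
    have hRp := givens_orthogonal hij (c := r) (s := r) (by rw [hr2]; norm_num)
    have hRm := givens_orthogonal hij (c := r) (s := -r)
      (by rw [neg_pow, hr2]; norm_num)
    have h1 := transfer μ v hv hrot _ hRp (fun x => (x i) ^ 2 * (x i) ^ 2) hg1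
    have h2 := transfer μ v hv hrot _ hRm (fun x => (x i) ^ 2 * (x i) ^ 2) hg1
    simp only [givens_mulVec_i hij] at h1 h2
    have hint4 : ∀ a bb : ℝ, |a| ≤ 1 → |bb| ≤ 1 →
        Integrable (fun ω => (a * v ω i + bb * v ω j) ^ 2
          * (a * v ω i + bb * v ω j) ^ 2) μ := by
      intro a bb ha hbb
      refine Integrable.mono' (integrable_const 16)
        ((((((hvi i).const_mul a).add ((hvi j).const_mul bb)).pow_const 2).mul
          ((((hvi i).const_mul a).add ((hvi j).const_mul bb)).pow_const 2))).aestronglyMeasurable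
        (ae_of_all _ fun ω => ?_)
      have t1 : |a * v ω i| ≤ 1 := by
        rw [abs_mul]; exact mul_le_one₀ ha (abs_nonneg _) (habs ω i)
      have t2 : |bb * v ω j| ≤ 1 := by
        rw [abs_mul]; exact mul_le_one₀ hbb (abs_nonneg _) (habs ω j)
      have h5 : |a * v ω i + bb * v ω j| ≤ 2 :=
        (abs_add_le _ _).trans (by linarith)
      rw [Real.norm_eq_abs, abs_of_nonneg (by positivity)]
      have hx2 : (a * v ω i + bb * v ω j) ^ 2 ≤ 4 := by
        nlinarith [sq_abs (a * v ω i + bb * v ω j), abs_nonneg (a * v ω i + bb * v ω j)]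
      nlinarith [sq_nonneg (a * v ω i + bb * v ω j)]
    have hri : |r| ≤ 1 := by
      rw [abs_of_nonneg (Real.sqrt_nonneg _)]
      nlinarith [hr2, Real.sqrt_nonneg (1/2 : ℝ)]
    have hrm : |(-r)| ≤ 1 := by rwa [abs_neg]
    have hint1 := hint4 r r hri hri
    have hint2 := hint4 r (-r) hri hrm
    -- sum the two rotated fourth moments
    have hadd : ∫ ω, ((r * v ω i + r * v ω j) ^ 2 * (r * v ω i + r * v ω j) ^ 2
        + (r * v ω i + -r * v ω j) ^ 2 * (r * v ω i + -r * v ω j) ^ 2) ∂μ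
        = 2 * m i i := by
      rw [integral_add hint1 hint2, h1, h2]; ring
    -- pointwise expansion
    have hpw : ∀ ω, (r * v ω i + r * v ω j) ^ 2 * (r * v ω i + r * v ω j) ^ 2
        + (r * v ω i + -r * v ω j) ^ 2 * (r * v ω i + -r * v ω j) ^ 2
        = (1/2) * ((v ω i) ^ 2 * (v ω i) ^ 2) + 3 * ((v ω i) ^ 2 * (v ω j) ^ 2)
          + (1/2) * ((v ω j) ^ 2 * (v ω j) ^ 2) := by
      intro ω
      linear_combination ((r ^ 2 + 1/2) * (2 * (v ω i) ^ 4 + 12 * (v ω i) ^ 2 * (v ω j) ^ 2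
        + 2 * (v ω j) ^ 4)) * hr2
    have hsplit : ∫ ω, ((r * v ω i + r * v ω j) ^ 2 * (r * v ω i + r * v ω j) ^ 2
        + (r * v ω i + -r * v ω j) ^ 2 * (r * v ω i + -r * v ω j) ^ 2) ∂μ
        = (1/2) * m i i + 3 * m i j + (1/2) * m j j := by
      have I3 : Integrable (fun ω => 1/2 * ((v ω i) ^ 2 * (v ω i) ^ 2)) μ :=
        (hintm i i).const_mul _
      have I4 : Integrable (fun ω => 3 * ((v ω i) ^ 2 * (v ω j) ^ 2)) μ :=
        (hintm i j).const_mul _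
      have I2 : Integrable (fun ω => 1/2 * ((v ω j) ^ 2 * (v ω j) ^ 2)) μ :=
        (hintm j j).const_mul _
      have I1 : Integrable (fun ω => 1/2 * ((v ω i) ^ 2 * (v ω i) ^ 2)
          + 3 * ((v ω i) ^ 2 * (v ω j) ^ 2)) μ := I3.add I4
      rw [integral_congr_ae (ae_of_all _ hpw), integral_add I1 I2, integral_add I3 I4,
        integral_const_mul, integral_const_mul, integral_const_mul]
    have hjj : m j j = m i i := (h4eq i j hij).symm
    rw [hadd] at hsplit
    rw [hjj] at hsplit
    linarith
  have hdiag : ∀ i : Fin n, m i i = b := by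
    intro i
    rcases eq_or_ne i i0 with rfl | hi
    · rfl
    · exact h4eq i i0 hi
  have hoff : ∀ i j : Fin n, i ≠ j → m i j = b / 3 := by
    intro i j hij
    rw [hmb i j hij, hdiag i]
  -- normalization
  have hone : ∑ i : Fin n, ∑ j : Fin n, m i j = 1 := by
    have hpt : ∀ ω, ∑ i : Fin n, ∑ j : Fin n, (v ω i) ^ 2 * (v ω j) ^ 2 = 1 := by
      intro ω
      rw [← Finset.sum_mul_sum]
      rw [hnorm ω]; norm_num
    have : ∑ i : Fin n, ∑ j : Fin n, m i j
        = ∫ ω, ∑ i : Fin n, ∑ j : Fin n, (v ω i) ^ 2 * (v ω j) ^ 2 ∂μ := by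
      rw [integral_finset_sum _ (fun i _ => integrable_finset_sum _ (fun j _ => hintm i j))]
      exact Finset.sum_congr rfl fun i _ =>
        (integral_finset_sum _ (fun j _ => hintm i j)).symm
    rw [this, integral_congr_ae (ae_of_all _ hpt)]
    simp
  have hnR : (0:ℝ) < n := by exact_mod_cast hn
  have hbval : b = 3 / (n * (n + 2)) := by
    have hrow : ∀ i : Fin n, ∑ j : Fin n, m i j = b + ((n:ℝ) - 1) * (b / 3) := by
      intro i
      rw [← Finset.add_sum_erase _ _ (Finset.mem_univ i), hdiag i]
      congr 1
      rw [Finset.sum_congr rfl (fun j hj => hoff i j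
        (fun h => (Finset.mem_erase.mp hj).1 h.symm)), Finset.sum_const,
        Finset.card_erase_of_mem (Finset.mem_univ i), Finset.card_univ, Fintype.card_fin]
      rw [nsmul_eq_mul]
      congr 1
      push_cast [Nat.cast_sub hn]
      ring
    rw [Finset.sum_congr rfl (fun i _ => hrow i), Finset.sum_const, Finset.card_univ,
      Fintype.card_fin, nsmul_eq_mul] at hone
    rw [eq_div_iff (by positivity)]
    nlinarith [hone]
  -- expansion of the square
  have hexp : ∫ ω, (∑ i, c i * (v ω i) ^ 2) ^ 2 ∂μ
      = ∑ i : Fin n, ∑ j : Fin n, c i * c j * m i j := by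
    have hpt : ∀ ω, (∑ i, c i * (v ω i) ^ 2) ^ 2
        = ∑ i : Fin n, ∑ j : Fin n, c i * c j * ((v ω i) ^ 2 * (v ω j) ^ 2) := by
      intro ω
      rw [sq, Finset.sum_mul_sum]
      exact Finset.sum_congr rfl fun i _ => Finset.sum_congr rfl fun j _ => by ring
    rw [integral_congr_ae (ae_of_all _ hpt),
      integral_finset_sum _ (fun i _ => integrable_finset_sum _
        (fun j _ => (hintm i j).const_mul _))]
    refine Finset.sum_congr rfl fun i _ => ?_
    rw [integral_finset_sum _ (fun j _ => (hintm i j).const_mul _)]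
    exact Finset.sum_congr rfl fun j _ => integral_const_mul _ _
  -- final algebra
  have hrow2 : ∀ i : Fin n, ∑ j : Fin n, c i * c j * m i j
      = c i ^ 2 * b + (b / 3) * (c i * ((∑ k, c k) - c i)) := by
    intro i
    rw [← Finset.add_sum_erase _ _ (Finset.mem_univ i), hdiag i]
    congr 1
    · ring
    rw [Finset.sum_congr rfl (fun j hj => by
      rw [hoff i j (fun h => (Finset.mem_erase.mp hj).1 h.symm)])]
    calc ∑ j ∈ Finset.univ.erase i, c i * c j * (b / 3)
        = (c i * (b / 3)) * ∑ j ∈ Finset.univ.erase i, c j := by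
          rw [Finset.mul_sum]
          exact Finset.sum_congr rfl fun j _ => by ring
      _ = (b / 3) * (c i * ((∑ k, c k) - c i)) := by
          rw [Finset.sum_erase_eq_sub (Finset.mem_univ i)]
          ring
  rw [hexp, Finset.sum_congr rfl (fun i _ => hrow2 i), Finset.sum_add_distrib]
  have e1 : ∑ i : Fin n, c i ^ 2 * b = b * ∑ i, c i ^ 2 := by
    rw [Finset.mul_sum]
    exact Finset.sum_congr rfl fun i _ => by ring
  have e2 : ∑ i : Fin n, (b / 3) * (c i * ((∑ k, c k) - c i))
      = (b / 3) * ((∑ k, c k) ^ 2 - ∑ i, c i ^ 2) := by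
    rw [← Finset.mul_sum]
    congr 1
    rw [Finset.sum_congr rfl (fun i (_ : i ∈ Finset.univ) =>
      show c i * ((∑ k, c k) - c i) = c i * (∑ k, c k) - c i ^ 2 by ring),
      Finset.sum_sub_distrib, ← Finset.sum_mul]
    ring
  rw [e1, e2, hbval]
  have hne : (n:ℝ) * ((n:ℝ) + 2) ≠ 0 := by positivity
  field_simp
  ring


/-- Second moment of the quadratic form of a uniform unit vector: for `A = Q diag(λ) Qᵀ`
symmetric, `f(A) = Q diag(f∘λ) Qᵀ`, and `v` uniform (rotation-invariant) on `S^{n-1}`,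
`E[(vᵀ f(A) v)²] = (2/(n(n+2))) Σ f(λᵢ)² + (1/(n(n+2))) (Σ f(λᵢ))²`. -/
theorem sphere_quadratic_form_second_moment
    {Ω : Type*} [MeasurableSpace Ω] (μ : Measure Ω) [IsProbabilityMeasure μ]
    (n : ℕ) (hn : 0 < n)
    (A Q : Matrix (Fin n) (Fin n) ℝ) (lam : Fin n → ℝ) (f : ℝ → ℝ)
    (hQ : Qᵀ * Q = 1) (hA : A = Q * Matrix.diagonal lam * Qᵀ)
    (fA : Matrix (Fin n) (Fin n) ℝ)
    (hfA : fA = Q * Matrix.diagonal (fun i => f (lam i)) * Qᵀ)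
    (v : Ω → Fin n → ℝ) (hv : Measurable v)
    (hnorm : ∀ ω, ∑ i, (v ω i) ^ 2 = 1)
    (hrot : ∀ R : Matrix (Fin n) (Fin n) ℝ, Rᵀ * R = 1 →
      Measure.map (fun ω => R.mulVec (v ω)) μ = Measure.map v μ) :
    ∫ ω, (v ω ⬝ᵥ fA.mulVec (v ω)) ^ 2 ∂μ =
      (2 / (n * (n + 2))) * ∑ i, f (lam i) ^ 2
        + (1 / (n * (n + 2))) * (∑ i, f (lam i)) ^ 2 := by
  set c : Fin n → ℝ := fun i => f (lam i) with hc
  -- pointwise diagonalization of the quadratic form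
  have hpt : ∀ x : Fin n → ℝ, x ⬝ᵥ fA.mulVec x = ∑ i, c i * ((Qᵀ.mulVec x) i) ^ 2 := by
    intro x
    rw [hfA, ← Matrix.mulVec_mulVec, ← Matrix.mulVec_mulVec,
      Matrix.dotProduct_mulVec, ← Matrix.mulVec_transpose]
    simp only [Matrix.mulVec_diagonal, dotProduct]
    exact Finset.sum_congr rfl fun i _ => by ring
  have hRT : (Qᵀ)ᵀ * Qᵀ = 1 := by
    rw [Matrix.transpose_transpose]
    exact mul_eq_one_comm.mp hQ
  have hF : Measurable fun x : Fin n → ℝ => (∑ i, c i * (x i) ^ 2) ^ 2 :=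
    (Finset.measurable_sum _ fun i _ =>
      ((measurable_pi_apply i).pow_const 2).const_mul _).pow_const 2
  calc ∫ ω, (v ω ⬝ᵥ fA.mulVec (v ω)) ^ 2 ∂μ
      = ∫ ω, (∑ i, c i * ((Qᵀ.mulVec (v ω)) i) ^ 2) ^ 2 ∂μ := by
        exact integral_congr_ae (ae_of_all _ fun ω => by simp only []; rw [hpt (v ω)])
    _ = ∫ ω, (∑ i, c i * (v ω i) ^ 2) ^ 2 ∂μ :=
        transfer μ v hv hrot Qᵀ hRT _ hF
    _ = (2 / (n * (n + 2))) * ∑ i, c i ^ 2 + (1 / (n * (n + 2))) * (∑ i, c i) ^ 2 :=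
        sphere_moment_core μ n hn v hv hnorm hrot c
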